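/- For every integer k ≥ 2, the value g_k(γ) = (γ-1)/((k+1)γ² - 3kγ + k - 1) satisfies 0.276 < g_k(γ) < 0.5, where γ is the dominant real root of x^k - 2x^{k-1} - x^{k-2} - ... - x - 1. -/

import Mathlib

def IsDomRoot (k : ℕ) (γ : ℝ) : Prop :=
  1 < γ ∧ γ ^ k = 2 * γ ^ (k - 1) + ∑ i ∈ Finset.range (k - 1), γ ^ i

noncomputable def g (k : ℕ) (z : ℝ) : ℝ :=
  (z - 1) / (((k : ℝ) + 1) * z ^ 2 - 3 * (k : ℝ) * z + ((k : ℝ) - 1))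

theorem g_bounds (k : ℕ) (hk : 2 ≤ k) (γ : ℝ) (hγ : IsDomRoot k γ) :
    0.276 < g k γ ∧ g k γ < 0.5 := by
  obtain ⟨m, rfl⟩ := Nat.exists_eq_add_of_le hk
  obtain ⟨hγ1, heq⟩ := hγ
  have hγ0 : 0 < γ := lt_trans one_pos hγ1
  have hk1 : 2 + m - 1 = m + 1 := by omega
  rw [hk1] at heq
  have ht0 : 0 < γ ^ (m + 1) := by positivity
  -- sum is at least 1
  have hsum_ge : (1:ℝ) ≤ ∑ i ∈ Finset.range (m+1), γ ^ i := by
    calc (1:ℝ) = γ ^ 0 := by norm_num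
    _ ≤ _ := Finset.single_le_sum (f := fun i => γ ^ i)
        (fun i _ => by positivity) (Finset.mem_range.mpr (Nat.succ_pos m))
  have hpow : γ ^ (2+m) = γ * γ ^ (m+1) := by ring
  -- γ > 2
  have hγ2 : 2 < γ := by
    by_contra h
    push_neg at h
    nlinarith [mul_le_mul_of_nonneg_right h ht0.le]
  -- geometric sum
  have hS : (γ - 1) * ∑ i ∈ Finset.range (m+1), γ ^ i = γ ^ (m+1) - 1 := by
    rw [geom_sum_eq (by linarith : γ ≠ 1), mul_div_cancel₀ _ (by intro h; apply hγ2.ne'; linarith [sub_eq_zero.mp h] : γ - 1 ≠ 0)]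
  -- key identity
  have hkey : γ ^ (m+1) * (γ^2 - 3*γ + 1) = -1 := by
    linear_combination (γ - 1) * heq + hS
  -- γ^(m+1) > 2^(m+1) ≥ m+2
  have ht2 : (2:ℝ) ^ (m+1) < γ ^ (m+1) :=
    pow_lt_pow_left₀ hγ2 (by norm_num) (Nat.succ_ne_zero m)
  have hcast : ((m:ℝ) + 2) ≤ 2 ^ (m+1) := by
    have h1 : m + 2 ≤ 2 ^ (m+1) := Nat.lt_two_pow_self (n := m+1)
    exact_mod_cast h1
  have hγ1sq : (1:ℝ) ≤ (γ - 1)^2 := by nlinarith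
  have hC : ((m:ℝ) + 2) < γ ^ (m+1) * (γ - 1)^2 := by
    nlinarith [mul_le_mul_of_nonneg_left hγ1sq ht0.le]
  -- γ < 2.62
  have hneg : γ^2 - 3*γ + 1 < 0 := by
    by_contra h
    push_neg at h
    nlinarith [mul_nonneg ht0.le h]
  have hγlt : γ < 2.62 := by nlinarith
  -- denominator
  simp only [g]
  push_cast
  set D : ℝ := (2 + (m:ℝ) + 1) * γ ^ 2 - 3 * (2 + (m:ℝ)) * γ + (2 + (m:ℝ) - 1) with hDdef
  have htD : γ ^ (m+1) * D = -((m:ℝ) + 2) + γ ^ (m+1) * (γ^2 - 1) := by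
    rw [hDdef]; linear_combination ((m:ℝ) + 2) * hkey
  have hD2 : 2 * (γ - 1) < D := by
    by_contra h
    push_neg at h
    nlinarith [mul_le_mul_of_nonneg_left h ht0.le]
  have hDpos : 0 < D := by linarith
  have hDlt : D < γ^2 - 1 := by
    by_contra h
    push_neg at h
    nlinarith [mul_le_mul_of_nonneg_left h ht0.le]
  constructor
  · rw [lt_div_iff₀ hDpos]
    nlinarith [mul_pos (show (0:ℝ) < γ - 1 by linarith) (show (0:ℝ) < 2.62 - γ by linarith)]
  · rw [div_lt_iff₀ hDpos]
    linarith
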